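/- arXiv:2412.21083 — 4 statements merged into one kernel-verified Lean document; each statement's English description precedes it below -/
import Mathlib

section
/- The stabilizer entropy is additive under tensor products: M_α(ψ ⊗ φ) = M_α(ψ) + M_α(φ), where the Weyl-Heisenberg group on the composite space ℂ^{d₁} ⊗ ℂ^{d₂} is the tensor product of the groups on the factors. -/
open scoped BigOperators Kronecker
open Matrix

noncomputable section

/-- The primitive `d`-th root of unity `ω = e^{2πi/d}`. -/
def omega (d : ℕ) : ℂ := Complex.exp (2 * Real.pi * Complex.I / d)

/-- A fixed square root of `ω`: `τ = e^{πi/d}`, so `τ ^ 2 = ω`. -/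
def tau (d : ℕ) : ℂ := Complex.exp (Real.pi * Complex.I / d)

/-- Weyl–Heisenberg displacement operator `D_a = ω^{a₁a₂/2} X^{a₁} Z^{a₂}` on `ℂ^d`,
where `X |k⟩ = |k+1⟩` is the shift and `Z |k⟩ = ω^k |k⟩` is the clock (arithmetic mod `d`). -/
def Disp (d : ℕ) (a : ℤ × ℤ) : Matrix (ZMod d) (ZMod d) ℂ := fun j k =>
  tau d ^ (a.1 * a.2) * omega d ^ (a.2 * (k.val : ℤ)) * (if j = k + (a.1 : ZMod d) then 1 else 0)

/-- Rank-one projector `|v⟩⟨v|`. -/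
def proj {n : Type*} (v : n → ℂ) : Matrix n n ℂ := Matrix.vecMulVec v (star v)

/-- Stabilizer entropy of order `α` of a state `ρ` on `ℂ^d`. -/
def stabEntropy (d : ℕ) [NeZero d] (α : ℝ) (ρ : Matrix (ZMod d) (ZMod d) ℂ) : ℝ :=
  (1 / (1 - α)) * Real.log (∑ a : ZMod d × ZMod d,
      ((1 / d) * ‖(Disp d ((a.1.val : ℤ), (a.2.val : ℤ)) * ρ).trace‖ ^ 2) ^ α)
    - Real.log d


lemma Disp_zero (d : ℕ) : Disp d (0, 0) = 1 := by
  ext j k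
  simp [Disp, Matrix.one_apply]

lemma trace_proj {n : Type*} [Fintype n] (v : n → ℂ)
    (hv : ∑ k, ‖v k‖ ^ 2 = 1) : (proj v).trace = 1 := by
  have : (proj v).trace = ∑ k, v k * star (v k) := by
    simp [proj, Matrix.trace, Matrix.diag, Matrix.vecMulVec_apply]
  rw [this]
  have : ∀ k, v k * star (v k) = ((‖v k‖ ^ 2 : ℝ) : ℂ) := by
    intro k
    rw [Complex.sq_norm]
    simp [Complex.mul_conj]
  simp_rw [this]
  rw [← Complex.ofReal_sum, hv, Complex.ofReal_one]

lemma sum_pos_aux (d : ℕ) [NeZero d] (α : ℝ) (v : ZMod d → ℂ)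
    (hv : ∑ k, ‖v k‖ ^ 2 = 1) :
    0 < ∑ a : ZMod d × ZMod d,
      ((1 / d) * ‖(Disp d ((a.1.val : ℤ), (a.2.val : ℤ)) * proj v).trace‖ ^ 2) ^ α := by
  apply Finset.sum_pos'
  · intro a _
    exact Real.rpow_nonneg (by positivity) _
  · refine ⟨(0, 0), Finset.mem_univ _, ?_⟩
    have h0 : Disp d (((0 : ZMod d).val : ℤ), ((0 : ZMod d).val : ℤ)) = 1 := by
      rw [ZMod.val_zero]; exact_mod_cast Disp_zero d
    rw [h0, one_mul, trace_proj v hv]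
    have hd : (0:ℝ) < d := by exact_mod_cast Nat.pos_of_ne_zero (NeZero.ne d)
    apply Real.rpow_pos_of_pos
    simp only [_root_.map_one, norm_one, one_pow, mul_one, one_div]
    exact inv_pos.mpr hd

/-- Additivity of the stabilizer entropy under tensor products:
`M_α(ψ ⊗ φ) = M_α(ψ) + M_α(φ)`, where on the composite space the Weyl–Heisenberg
displacement operators are the `D_a ⊗ D_b`. -/
theorem stabEntropy_additive (d₁ d₂ : ℕ) [NeZero d₁] [NeZero d₂] (α : ℝ) (hα : 2 ≤ α)
    (ψ : ZMod d₁ → ℂ) (φ : ZMod d₂ → ℂ)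
    (hψ : ∑ k, ‖ψ k‖ ^ 2 = 1) (hφ : ∑ k, ‖φ k‖ ^ 2 = 1) :
    (1 / (1 - α)) * Real.log
        (∑ a : (ZMod d₁ × ZMod d₁) × (ZMod d₂ × ZMod d₂),
          ((1 / (d₁ * d₂) : ℝ) *
            ‖(((Disp d₁ ((a.1.1.val : ℤ), (a.1.2.val : ℤ)) ⊗ₖ
                  Disp d₂ ((a.2.1.val : ℤ), (a.2.2.val : ℤ))) *
                (proj ψ ⊗ₖ proj φ)).trace)‖ ^ 2) ^ α)
      - Real.log ((d₁ : ℝ) * d₂)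
    = stabEntropy d₁ α (proj ψ) + stabEntropy d₂ α (proj φ) := by
  set f : ZMod d₁ × ZMod d₁ → ℝ := fun a =>
    ((1 / d₁) * ‖(Disp d₁ ((a.1.val : ℤ), (a.2.val : ℤ)) * proj ψ).trace‖ ^ 2) ^ α
    with hf
  set g : ZMod d₂ × ZMod d₂ → ℝ := fun b =>
    ((1 / d₂) * ‖(Disp d₂ ((b.1.val : ℤ), (b.2.val : ℤ)) * proj φ).trace‖ ^ 2) ^ α
    with hg
  have hfac : (∑ a : (ZMod d₁ × ZMod d₁) × (ZMod d₂ × ZMod d₂),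
          ((1 / (d₁ * d₂) : ℝ) *
            ‖(((Disp d₁ ((a.1.1.val : ℤ), (a.1.2.val : ℤ)) ⊗ₖ
                  Disp d₂ ((a.2.1.val : ℤ), (a.2.2.val : ℤ))) *
                (proj ψ ⊗ₖ proj φ)).trace)‖ ^ 2) ^ α)
      = (∑ a, f a) * (∑ b, g b) := by
    rw [Fintype.sum_prod_type, Finset.sum_mul_sum]
    refine Finset.sum_congr rfl fun a _ => Finset.sum_congr rfl fun b _ => ?_
    rw [← Matrix.mul_kronecker_mul, Matrix.trace_kronecker, norm_mul, mul_pow]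
    rw [hf, hg]
    dsimp only
    rw [← Real.mul_rpow (by positivity) (by positivity)]
    ring_nf
  rw [hfac]
  have h₁ := sum_pos_aux d₁ α ψ hψ
  have h₂ := sum_pos_aux d₂ α φ hφ
  have hd₁ : (0:ℝ) < d₁ := by exact_mod_cast Nat.pos_of_ne_zero (NeZero.ne d₁)
  have hd₂ : (0:ℝ) < d₂ := by exact_mod_cast Nat.pos_of_ne_zero (NeZero.ne d₂)
  rw [Real.log_mul h₁.ne' h₂.ne', Real.log_mul hd₁.ne' hd₂.ne']
  simp only [stabEntropy]
  ring
end
end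

section
/- If {φ_i}_{i=1}^{d²} are rank-1 projectors on ℂ^d with tr(φ_i φ_j) = 1/(d+1) for all i ≠ j, then ∑_i φ_i = d·I. -/
open scoped BigOperators Kronecker
open Matrix

noncomputable section

/-- If `d²` rank-one projectors on `ℂ^d` satisfy `tr(φᵢ φⱼ) = 1/(d+1)` for all `i ≠ j`
(a SIC), then they sum to `d · I`. -/
theorem sic_sum_eq (d : ℕ) (hd : 0 < d) (v : Fin (d ^ 2) → Fin d → ℂ)
    (hv : ∀ i, ∑ k, ‖v i k‖ ^ 2 = 1)
    (hsic : ∀ i j, i ≠ j → (proj (v i) * proj (v j)).trace = 1 / ((d : ℂ) + 1)) :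
    ∑ i, proj (v i) = (d : ℂ) • (1 : Matrix (Fin d) (Fin d) ℂ) := by
  have hd1 : ((d : ℂ) + 1) ≠ 0 := by
    have : ((d + 1 : ℕ) : ℂ) ≠ 0 := Nat.cast_ne_zero.mpr (Nat.succ_ne_zero d)
    simpa using this
  -- normalization in ℂ
  have hnorm : ∀ i, ∑ k, v i k * (starRingEnd ℂ) (v i k) = 1 := by
    intro i
    have h1 : ∑ k, v i k * (starRingEnd ℂ) (v i k)
        = ((∑ k, ‖v i k‖ ^ 2 : ℝ) : ℂ) := by
      push_cast
      refine Finset.sum_congr rfl fun k _ => ?_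
      rw [Complex.mul_conj, Complex.normSq_eq_norm_sq]
      push_cast
      ring
    rw [h1, hv i, Complex.ofReal_one]
  have htrace : ∀ i, (proj (v i)).trace = 1 := by
    intro i
    simpa [proj, Matrix.trace, Matrix.diag, Matrix.vecMulVec_apply] using hnorm i
  have hself : ∀ i, (proj (v i) * proj (v i)).trace = 1 := by
    intro i
    have : (proj (v i) * proj (v i)).trace
        = (∑ j, v i j * (starRingEnd ℂ) (v i j)) * (∑ k, v i k * (starRingEnd ℂ) (v i k)) := by
      rw [Finset.sum_mul_sum]
      simp only [Matrix.trace, Matrix.diag, Matrix.mul_apply, proj, Matrix.vecMulVec_apply,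
        Pi.star_apply, RingHom.star_def]
      refine Finset.sum_congr rfl fun j _ => Finset.sum_congr rfl fun k _ => ?_
      simp only [Complex.star_def]
      ring
    rw [this, hnorm i, one_mul]
  set S : Matrix (Fin d) (Fin d) ℂ := ∑ i, proj (v i) with hSdef
  have hcard : (Finset.univ : Finset (Fin (d ^ 2))).card = d ^ 2 := by simp
  have hStr : S.trace = (d : ℂ) ^ 2 := by
    rw [hSdef, Matrix.trace_sum]
    simp [htrace]
  have hSS : (S * S).trace = (d : ℂ) ^ 3 := by
    have expand : (S * S).trace = ∑ i, ∑ j, (proj (v i) * proj (v j)).trace := by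
      rw [hSdef, Finset.sum_mul]
      rw [Matrix.trace_sum]
      refine Finset.sum_congr rfl fun i _ => ?_
      rw [Finset.mul_sum, Matrix.trace_sum]
    rw [expand]
    have inner : ∀ i : Fin (d ^ 2), ∑ j, (proj (v i) * proj (v j)).trace
        = 1 + ((d : ℂ) ^ 2 - 1) * (1 / ((d : ℂ) + 1)) := by
      intro i
      rw [← Finset.add_sum_erase _ _ (Finset.mem_univ i), hself i]
      congr 1
      rw [Finset.sum_congr rfl (fun j hj => hsic i j (by
        rintro rfl; exact (Finset.mem_erase.mp hj).1 rfl)), Finset.sum_const, nsmul_eq_mul]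
      congr 1
      rw [Finset.card_erase_of_mem (Finset.mem_univ i), hcard]
      have h2 : 1 ≤ d ^ 2 := Nat.one_le_iff_ne_zero.mpr (pow_ne_zero _ hd.ne')
      push_cast [Nat.cast_sub h2]
      ring
    rw [Finset.sum_congr rfl fun i _ => inner i, Finset.sum_const, hcard, nsmul_eq_mul]
    push_cast
    field_simp
    ring
  set A : Matrix (Fin d) (Fin d) ℂ := S - (d : ℂ) • 1 with hAdef
  have hAherm : Aᴴ = A := by
    rw [hAdef, Matrix.conjTranspose_sub, Matrix.conjTranspose_smul, Matrix.conjTranspose_one,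
      hSdef, Matrix.conjTranspose_sum]
    congr 1
    · refine Finset.sum_congr rfl fun i _ => ?_
      ext j k
      simp [proj, Matrix.conjTranspose_apply, Matrix.vecMulVec_apply, mul_comm]
    · congr 1
      simp [Complex.star_def, Complex.conj_natCast]
  have htrA : (Aᴴ * A).trace = 0 := by
    rw [hAherm, hAdef]
    simp only [Matrix.sub_mul, Matrix.mul_sub, Matrix.trace_sub, Matrix.smul_mul,
      Matrix.mul_smul, Matrix.one_mul, Matrix.mul_one, Matrix.trace_smul, Matrix.trace_one,
      hSS, hStr, smul_eq_mul, Fintype.card_fin]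
    ring
  have h0 : ∑ k, ∑ j, Complex.normSq (A j k) = 0 := by
    have hre : (Aᴴ * A).trace = ((∑ k, ∑ j, Complex.normSq (A j k) : ℝ) : ℂ) := by
      push_cast
      simp only [Matrix.trace, Matrix.diag, Matrix.mul_apply, Matrix.conjTranspose_apply,
        Complex.star_def]
      refine Finset.sum_congr rfl fun k _ => Finset.sum_congr rfl fun j _ => ?_
      rw [Complex.normSq_eq_conj_mul_self]
    rw [htrA] at hre
    exact_mod_cast hre.symm
  have hAzero : A = 0 := by
    ext j k
    have h1 := (Finset.sum_eq_zero_iff_of_nonneg (fun k _ =>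
      Finset.sum_nonneg fun j _ => Complex.normSq_nonneg _)).mp h0 k (Finset.mem_univ k)
    have h2 := (Finset.sum_eq_zero_iff_of_nonneg (fun j _ =>
      Complex.normSq_nonneg _)).mp h1 j (Finset.mem_univ j)
    simpa using Complex.normSq_eq_zero.mp h2
  have := sub_eq_zero.mp (hAdef ▸ hAzero)
  simpa [hSdef] using this
end
end

section
/- Let {φ_i}_{i=1}^{d²} be rank-1 projectors on ℂ^d and α ≥ 1 a real number. Then K_α = ∑_{i≠j} (tr(φ_i φ_j))^{2α} ≥ d²(d−1)/(d+1)^{2α−1}, with equality if and only if the set is a SIC (tr(φ_i φ_j) = 1/(d+1) for all i ≠ j). -/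
open scoped BigOperators Kronecker
open Matrix

noncomputable section

lemma trace_proj_s12 {n : Type*} [Fintype n] (u w : n → ℂ) :
    (proj u * proj w).trace = ((Complex.normSq (∑ m, (starRingEnd ℂ) (u m) * w m) : ℝ) : ℂ) := by
  have h : (proj u * proj w).trace
      = (∑ m, (starRingEnd ℂ) (u m) * w m) * (∑ j, u j * (starRingEnd ℂ) (w j)) := by
    simp only [Matrix.trace, Matrix.diag, Matrix.mul_apply, proj, Matrix.vecMulVec_apply,
      Pi.star_apply, RCLike.star_def, Finset.sum_mul_sum]
    rw [Finset.sum_comm]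
    congr 1; ext m; congr 1; ext j; ring
  rw [h]
  have h2 : (∑ j, u j * (starRingEnd ℂ) (w j))
      = (starRingEnd ℂ) (∑ m, (starRingEnd ℂ) (u m) * w m) := by
    rw [map_sum]; congr 1; ext m; rw [_root_.map_mul, Complex.conj_conj]
  rw [h2, Complex.mul_conj]

lemma sum_normSq_eq {N n : Type*} [Fintype N] [Fintype n] (v : N → n → ℂ) :
    ∑ i, ∑ j, Complex.normSq (∑ m, (starRingEnd ℂ) (v i m) * v j m)
      = ∑ m, ∑ m', Complex.normSq (∑ i, v i m * (starRingEnd ℂ) (v i m')) := by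
  have : (∑ i, ∑ j, ((Complex.normSq (∑ m, (starRingEnd ℂ) (v i m) * v j m) : ℝ) : ℂ))
      = ∑ m, ∑ m', ((Complex.normSq (∑ i, v i m * (starRingEnd ℂ) (v i m')) : ℝ) : ℂ) := by
    have hz : ∀ i j : N, ((Complex.normSq (∑ m, (starRingEnd ℂ) (v i m) * v j m) : ℝ) : ℂ)
        = ∑ m, ∑ m', ((starRingEnd ℂ) (v i m) * v j m) * (v i m' * (starRingEnd ℂ) (v j m')) := by
      intro i j
      rw [← Complex.mul_conj, map_sum, Finset.sum_mul_sum]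
      congr 1; ext m; congr 1; ext m'
      rw [_root_.map_mul, Complex.conj_conj]
    have hs : ∀ m m' : n, ((Complex.normSq (∑ i, v i m * (starRingEnd ℂ) (v i m')) : ℝ) : ℂ)
        = ∑ i, ∑ j, (v i m * (starRingEnd ℂ) (v i m')) * ((starRingEnd ℂ) (v j m) * v j m') := by
      intro m m'
      rw [← Complex.mul_conj, map_sum, Finset.sum_mul_sum]
      congr 1; ext i; congr 1; ext j
      rw [_root_.map_mul, Complex.conj_conj]
    simp only [hz, hs]
    rw [show (∑ i, ∑ j, ∑ m, ∑ m', ((starRingEnd ℂ) (v i m) * v j m) * (v i m' * (starRingEnd ℂ) (v j m')))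
        = ∑ i, ∑ m, ∑ m', ∑ j, ((starRingEnd ℂ) (v i m) * v j m) * (v i m' * (starRingEnd ℂ) (v j m')) from
      Finset.sum_congr rfl fun i _ => by rw [Finset.sum_comm]; exact Finset.sum_congr rfl fun m _ => Finset.sum_comm]
    rw [Finset.sum_comm]
    refine Finset.sum_congr rfl fun m _ => ?_
    rw [Finset.sum_comm]
    refine Finset.sum_congr rfl fun m' _ => ?_
    rw [Finset.sum_comm]
    refine Finset.sum_congr rfl fun i _ => Finset.sum_congr rfl fun j _ => ?_
    ring
  exact_mod_cast this

lemma frame_bound (d : ℕ) (hd : 0 < d) (v : Fin (d ^ 2) → Fin d → ℂ)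
    (hv : ∀ i, ∑ k, ‖v i k‖ ^ 2 = 1) :
    (d : ℝ) ^ 3 ≤ ∑ i, ∑ j, Complex.normSq (∑ m, (starRingEnd ℂ) (v i m) * v j m) := by
  rw [sum_normSq_eq]
  set s : Fin d → Fin d → ℂ := fun m m' => ∑ i, v i m * (starRingEnd ℂ) (v i m') with hs
  -- diagonal entries are real with sum d²
  have hdiag : ∀ m, s m m = ((∑ i, Complex.normSq (v i m) : ℝ) : ℂ) := by
    intro m; rw [hs]; push_cast
    exact Finset.sum_congr rfl fun i _ => (Complex.mul_conj _)
  have hsum : ∑ m, (∑ i, Complex.normSq (v i m)) = (d : ℝ) ^ 2 := by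
    rw [Finset.sum_comm]
    have : ∀ i, ∑ m, Complex.normSq (v i m) = 1 := by
      intro i
      have := hv i
      rw [← this]
      exact Finset.sum_congr rfl fun m _ => (Complex.sq_norm _).symm
    simp [this]
  -- Chebyshev / Cauchy-Schwarz on the diagonal
  have hcs : ((d : ℝ) ^ 2) ^ 2 ≤ (d : ℝ) * ∑ m, (∑ i, Complex.normSq (v i m)) ^ 2 := by
    have := sq_sum_le_card_mul_sum_sq (s := (Finset.univ : Finset (Fin d)))
      (f := fun m => ∑ i, Complex.normSq (v i m))
    simpa [hsum] using this
  have hdle : ∑ m, (∑ i, Complex.normSq (v i m)) ^ 2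
      ≤ ∑ m, ∑ m', Complex.normSq (s m m') := by
    refine Finset.sum_le_sum fun m _ => ?_
    have h1 : (∑ i, Complex.normSq (v i m)) ^ 2 = Complex.normSq (s m m) := by
      rw [hdiag m, Complex.normSq_ofReal, sq]
    rw [h1]
    exact Finset.single_le_sum (f := fun m' => Complex.normSq (s m m'))
      (fun m' _ => Complex.normSq_nonneg _) (Finset.mem_univ m)
  have hdpos : (0:ℝ) < d := Nat.cast_pos.mpr hd
  nlinarith [hcs, hdle, hdpos]

lemma tangent_le {c x p : ℝ} (hc : 0 < c) (hx : 0 ≤ x) (hp : 1 < p) :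
    c ^ p + p * c ^ (p - 1) * (x - c) ≤ x ^ p := by
  set s : ℝ := x / c - 1 with hsdef
  have hs : -1 ≤ s := by
    have : 0 ≤ x / c := div_nonneg hx hc.le
    simp [hsdef]; linarith
  have hxc : x = c * (1 + s) := by rw [hsdef, add_sub_cancel]; field_simp
  have hber : 1 + p * s ≤ (1 + s) ^ p := one_add_mul_self_le_rpow_one_add hs hp.le
  have hmul : x ^ p = c ^ p * (1 + s) ^ p := by
    rw [hxc, Real.mul_rpow hc.le (by linarith)]
  have hcp : (0:ℝ) < c ^ p := Real.rpow_pos_of_pos hc p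
  have hlhs : c ^ p + p * c ^ (p - 1) * (x - c) = c ^ p * (1 + p * s) := by
    have h1 : c ^ (p - 1) * c = c ^ p := by
      rw [← Real.rpow_add_one hc.ne' (p-1)]; norm_num
    have h2 : x - c = c * s := by rw [hxc]; ring
    rw [h2]
    calc c ^ p + p * c ^ (p - 1) * (c * s) = c ^ p + p * (c ^ (p-1) * c) * s := by ring
      _ = c ^ p * (1 + p * s) := by rw [h1]; ring
  rw [hlhs, hmul]
  exact mul_le_mul_of_nonneg_left hber hcp.le

lemma tangent_lt {c x p : ℝ} (hc : 0 < c) (hx : 0 ≤ x) (hp : 1 < p) (hne : x ≠ c) :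
    c ^ p + p * c ^ (p - 1) * (x - c) < x ^ p := by
  set s : ℝ := x / c - 1 with hsdef
  have hs : -1 ≤ s := by
    have : 0 ≤ x / c := div_nonneg hx hc.le
    simp [hsdef]; linarith
  have hs0 : s ≠ 0 := by
    intro h
    apply hne
    have : x / c = 1 := by simp [hsdef] at h; linarith
    field_simp at this; linarith
  have hxc : x = c * (1 + s) := by rw [hsdef, add_sub_cancel]; field_simp
  have hber : 1 + p * s < (1 + s) ^ p := one_add_mul_self_lt_rpow_one_add hs hs0 hp
  have hmul : x ^ p = c ^ p * (1 + s) ^ p := by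
    rw [hxc, Real.mul_rpow hc.le (by linarith)]
  have hcp : (0:ℝ) < c ^ p := Real.rpow_pos_of_pos hc p
  have hlhs : c ^ p + p * c ^ (p - 1) * (x - c) = c ^ p * (1 + p * s) := by
    have h1 : c ^ (p - 1) * c = c ^ p := by
      rw [← Real.rpow_add_one hc.ne' (p-1)]; norm_num
    have h2 : x - c = c * s := by rw [hxc]; ring
    rw [h2]
    calc c ^ p + p * c ^ (p - 1) * (c * s) = c ^ p + p * (c ^ (p-1) * c) * s := by ring
      _ = c ^ p * (1 + p * s) := by rw [h1]; ring
  rw [hlhs, hmul]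
  exact (mul_lt_mul_iff_right₀ hcp).mpr hber

/-- The `α`-orthogonality bound: for `d²` rank-one projectors on `ℂ^d` and real `α ≥ 1`,
`K_α = ∑_{i≠j} (tr(φᵢ φⱼ))^{2α} ≥ d²(d-1)/(d+1)^{2α-1}`, with equality iff the set is a
SIC, i.e. `tr(φᵢ φⱼ) = 1/(d+1)` for all `i ≠ j`. -/
theorem Kalpha_bound (d : ℕ) (hd : 0 < d) (α : ℝ) (hα : 1 ≤ α)
    (v : Fin (d ^ 2) → Fin d → ℂ)
    (hv : ∀ i, ∑ k, ‖v i k‖ ^ 2 = 1) :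
    ((d : ℝ) ^ 2 * ((d : ℝ) - 1) / ((d : ℝ) + 1) ^ (2 * α - 1) ≤
      ∑ i, ∑ j ∈ Finset.univ.erase i, ((proj (v i) * proj (v j)).trace).re ^ (2 * α)) ∧
    ((∑ i, ∑ j ∈ Finset.univ.erase i, ((proj (v i) * proj (v j)).trace).re ^ (2 * α) =
        (d : ℝ) ^ 2 * ((d : ℝ) - 1) / ((d : ℝ) + 1) ^ (2 * α - 1)) ↔
      ∀ i j, i ≠ j → (proj (v i) * proj (v j)).trace = 1 / ((d : ℂ) + 1)) := by
  classical
  have hp : (1:ℝ) < 2 * α := by linarith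
  have hd1 : (0:ℝ) < (d:ℝ) := Nat.cast_pos.mpr hd
  have hdp1 : (0:ℝ) < (d:ℝ) + 1 := by linarith
  set p : ℝ := 2 * α with hpdef
  set c : ℝ := 1 / ((d:ℝ) + 1) with hcdef
  have hc : 0 < c := by positivity
  set x : Fin (d^2) → Fin (d^2) → ℝ :=
    fun i j => Complex.normSq (∑ m, (starRingEnd ℂ) (v i m) * v j m) with hxdef
  have htr : ∀ i j, (proj (v i) * proj (v j)).trace = ((x i j : ℝ) : ℂ) :=
    fun i j => trace_proj_s12 _ _
  have hre : ∀ i j, ((proj (v i) * proj (v j)).trace).re = x i j := by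
    intro i j; rw [htr]; simp
  have hxnn : ∀ i j, 0 ≤ x i j := fun i j => Complex.normSq_nonneg _
  have hxd : ∀ i, x i i = 1 := by
    intro i
    have hz : (∑ m, (starRingEnd ℂ) (v i m) * v i m) = 1 := by
      have h1 : ∀ m, (starRingEnd ℂ) (v i m) * v i m
          = ((‖v i m‖ ^ 2 : ℝ) : ℂ) := by
        intro m; rw [mul_comm, Complex.mul_conj, Complex.sq_norm]
      rw [Finset.sum_congr rfl (fun m _ => h1 m), ← Complex.ofReal_sum, hv i,
        Complex.ofReal_one]
    show Complex.normSq _ = 1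
    rw [hz, Complex.normSq_one]
  -- off-diagonal sum lower bound
  have hTotal : ∑ i, ∑ j, x i j = (d:ℝ)^2 + ∑ i, ∑ j ∈ Finset.univ.erase i, x i j := by
    have h1 : ∀ i : Fin (d^2), ∑ j, x i j
        = 1 + ∑ j ∈ Finset.univ.erase i, x i j := by
      intro i
      rw [← Finset.add_sum_erase _ _ (Finset.mem_univ i), hxd i]
    rw [Finset.sum_congr rfl (fun i _ => h1 i), Finset.sum_add_distrib]
    congr 1
    simp [Finset.card_univ]
  have hframe : (d:ℝ)^3 ≤ ∑ i, ∑ j, x i j := frame_bound d hd v hv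
  have hSoff : (d:ℝ)^2 * ((d:ℝ) - 1) ≤ ∑ i, ∑ j ∈ Finset.univ.erase i, x i j := by
    nlinarith [hframe, hTotal]
  -- cardinalities
  have hd2 : 1 ≤ d^2 := Nat.one_le_iff_ne_zero.mpr (pow_ne_zero _ hd.ne')
  have hcount : ∀ i : Fin (d^2), (((Finset.univ : Finset (Fin (d^2))).erase i).card : ℝ)
      = (d:ℝ)^2 - 1 := by
    intro i
    rw [Finset.card_erase_of_mem (Finset.mem_univ i), Finset.card_univ]
    simp only [Fintype.card_fin]
    rw [Nat.cast_sub hd2]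
    push_cast; ring
  have hconst : ∀ y : ℝ, ∑ i : Fin (d^2), ∑ _j ∈ Finset.univ.erase i, y
      = ((d:ℝ)^2 * ((d:ℝ)^2 - 1)) * y := by
    intro y
    simp only [Finset.sum_const, nsmul_eq_mul]
    rw [Finset.sum_congr rfl (fun i _ => by rw [hcount i])]
    rw [Finset.sum_const, nsmul_eq_mul, Finset.card_univ]
    simp only [Fintype.card_fin]
    push_cast; ring
  -- the bound as n * c^p
  have hBeq : (d : ℝ) ^ 2 * ((d : ℝ) - 1) / ((d : ℝ) + 1) ^ (p - 1)
      = ((d:ℝ)^2 * ((d:ℝ)^2 - 1)) * c ^ p := by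
    have hpow : ((d:ℝ)+1) ^ p = ((d:ℝ)+1) ^ (p - 1) * ((d:ℝ)+1) := by
      rw [← Real.rpow_add_one hdp1.ne' (p-1)]; norm_num
    have hcp : c ^ p = 1 / (((d:ℝ)+1) ^ p) := by
      rw [hcdef, Real.div_rpow zero_le_one hdp1.le, Real.one_rpow]
    have hpos : 0 < ((d:ℝ)+1) ^ (p-1) := Real.rpow_pos_of_pos hdp1 _
    rw [hcp, hpow]
    field_simp
    ring
  -- tangent line sum
  have htang : ∀ i : Fin (d^2), ∀ j ∈ Finset.univ.erase i,
      c^p + p * c^(p-1) * (x i j - c) ≤ x i j ^ p :=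
    fun i j _ => tangent_le hc (hxnn i j) hp
  have htang_sum : ∀ i : Fin (d^2),
      ∑ j ∈ Finset.univ.erase i, (c^p + p * c^(p-1) * (x i j - c))
      ≤ ∑ j ∈ Finset.univ.erase i, x i j ^ p :=
    fun i => Finset.sum_le_sum (htang i)
  have hgexp : ∑ i, ∑ j ∈ Finset.univ.erase i, (c^p + p * c^(p-1) * (x i j - c))
      = ((d:ℝ)^2 * ((d:ℝ)^2 - 1)) * c^p
        + p * c^(p-1) * ((∑ i, ∑ j ∈ Finset.univ.erase i, x i j)
            - ((d:ℝ)^2 * ((d:ℝ)^2 - 1)) * c) := by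
    have e1 : ∀ i : Fin (d^2), ∑ j ∈ Finset.univ.erase i, (c^p + p * c^(p-1) * (x i j - c))
        = (∑ _j ∈ Finset.univ.erase i, c^p)
          + p * c^(p-1) * ((∑ j ∈ Finset.univ.erase i, x i j)
              - ∑ _j ∈ Finset.univ.erase i, c) := by
      intro i
      rw [Finset.sum_add_distrib, ← Finset.mul_sum, Finset.sum_sub_distrib]
    rw [Finset.sum_congr rfl (fun i _ => e1 i), Finset.sum_add_distrib, hconst,
      ← Finset.mul_sum, Finset.sum_sub_distrib, hconst]
  have hglower : ((d:ℝ)^2 * ((d:ℝ)^2 - 1)) * c^p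
      ≤ ∑ i, ∑ j ∈ Finset.univ.erase i, (c^p + p * c^(p-1) * (x i j - c)) := by
    rw [hgexp]
    have h1 : ((d:ℝ)^2 * ((d:ℝ)^2 - 1)) * c = (d:ℝ)^2 * ((d:ℝ) - 1) := by
      rw [hcdef]; field_simp; ring
    have h2 : 0 < p * c^(p-1) := by positivity
    nlinarith [hSoff, h2]
  have hmain : ((d:ℝ)^2 * ((d:ℝ)^2 - 1)) * c^p
      ≤ ∑ i, ∑ j ∈ Finset.univ.erase i, x i j ^ p :=
    le_trans hglower (Finset.sum_le_sum (fun i _ => htang_sum i))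
  simp only [hre]
  constructor
  · rw [hBeq]; exact hmain
  constructor
  · -- equality → SIC
    intro hK
    have hxp_eq : ∑ i, ∑ j ∈ Finset.univ.erase i, x i j ^ p
        = ∑ i, ∑ j ∈ Finset.univ.erase i, (c^p + p * c^(p-1) * (x i j - c)) := by
      have h1 : ∑ i, ∑ j ∈ Finset.univ.erase i, x i j ^ p
          = ((d:ℝ)^2 * ((d:ℝ)^2 - 1)) * c^p := by rw [hK, hBeq]
      have h2 := Finset.sum_le_sum (fun i (_ : i ∈ Finset.univ) => htang_sum i)
      linarith [hglower, h2]
    have hpt : ∀ i : Fin (d^2), ∀ j ∈ Finset.univ.erase i,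
        c^p + p * c^(p-1) * (x i j - c) = x i j ^ p := by
      have houter := (Finset.sum_eq_sum_iff_of_le
        (fun i (_ : i ∈ Finset.univ) => htang_sum i)).mp hxp_eq.symm
      intro i j hj
      exact (Finset.sum_eq_sum_iff_of_le (htang i)).mp (houter i (Finset.mem_univ i)) j hj
    intro i j hij
    have hj : j ∈ Finset.univ.erase i := Finset.mem_erase.mpr ⟨hij.symm, Finset.mem_univ j⟩
    have hxc : x i j = c := by
      by_contra hne
      exact absurd (hpt i j hj) (ne_of_lt (tangent_lt hc (hxnn i j) hp hne))
    rw [htr, hxc, hcdef]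
    push_cast
    ring
  · -- SIC → equality
    intro hS
    have hxc : ∀ i : Fin (d^2), ∀ j ∈ Finset.univ.erase i, x i j = c := by
      intro i j hj
      have hij : i ≠ j := fun h => (Finset.mem_erase.mp hj).1 h.symm
      have h1 := hS i j hij
      rw [htr] at h1
      have h2 : ((x i j : ℝ) : ℂ) = ((c : ℝ) : ℂ) := by
        rw [h1, hcdef]; push_cast; ring
      exact_mod_cast h2
    have : ∑ i, ∑ j ∈ Finset.univ.erase i, x i j ^ p
        = ∑ i : Fin (d^2), ∑ _j ∈ Finset.univ.erase i, c ^ p := by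
      exact Finset.sum_congr rfl fun i _ => Finset.sum_congr rfl fun j hj => by rw [hxc i j hj]
    rw [this, hconst, hBeq]
end
end

section
/- For any unit vector |ψ⟩ ∈ ℂ^d and any real α ≥ 2, the stabilizer entropy satisfies M_α(ψ) ≤ (1/(1−α)) log[(1 + (d−1)(d+1)^{1−α})/d]. -/
open scoped BigOperators Kronecker
open Matrix

noncomputable section

lemma omega_ne_zero (d : ℕ) : omega d ≠ 0 := Complex.exp_ne_zero _

lemma omega_pow_d (d : ℕ) [NeZero d] : omega d ^ (d:ℤ) = 1 := by
  have := Complex.isPrimitiveRoot_exp d (NeZero.ne d)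
  simpa [omega] using (this.zpow_eq_one_iff_dvd (d:ℤ)).mpr dvd_rfl

lemma sum_zmod_pow_val (d : ℕ) [NeZero d] (x : ℂ) :
    ∑ m : ZMod d, x ^ (m.val) = ∑ i ∈ Finset.range d, x ^ i := by
  refine Finset.sum_nbij' (fun m => m.val) (fun i => (i : ZMod d)) ?_ ?_ ?_ ?_ ?_ <;>
    intros <;> simp_all [ZMod.val_lt, ZMod.natCast_val, Finset.mem_range, Nat.mod_eq_of_lt]

lemma sum_omega_zpow (d : ℕ) [NeZero d] (k l : ZMod d) :
    ∑ m : ZMod d, omega d ^ ((m.val : ℤ) * ((k.val:ℤ) - (l.val:ℤ))) =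
      if k = l then (d : ℂ) else 0 := by
  have hprim := Complex.isPrimitiveRoot_exp d (NeZero.ne d)
  set j : ℤ := (k.val:ℤ) - (l.val:ℤ) with hj
  have hx : ∀ m : ZMod d, omega d ^ ((m.val : ℤ) * j) = (omega d ^ j) ^ (m.val) := by
    intro m
    rw [mul_comm, _root_.zpow_mul, zpow_natCast]
  simp_rw [hx]
  rw [sum_zmod_pow_val]
  by_cases h : k = l
  · simp [h, hj]
  · have hj0 : j ≠ 0 := by
      simp only [hj, sub_ne_zero]
      exact_mod_cast fun e => h (ZMod.val_injective d (by exact_mod_cast e))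
    have hnd : ¬ (d:ℤ) ∣ j := by
      intro hdvd
      have h1 : |j| < d := by
        have := ZMod.val_lt k; have := ZMod.val_lt l
        rw [hj, abs_sub_lt_iff]; omega
      have := Int.le_of_dvd (abs_pos.mpr hj0) ((dvd_abs _ _).mpr hdvd)
      omega
    have hone : omega d ^ j ≠ 1 := by
      rw [show omega d = Complex.exp (2 * Real.pi * Complex.I / d) from rfl]
      exact fun e => hnd ((hprim.zpow_eq_one_iff_dvd j).mp e)
    rw [geom_sum_eq hone, if_neg h]
    rw [← zpow_natCast (omega d ^ j) d, ← _root_.zpow_mul, mul_comm, _root_.zpow_mul, omega_pow_d, _root_.one_zpow]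
    simp
noncomputable section

lemma abs_tau_zpow (d : ℕ) (n : ℤ) : ‖tau d ^ n‖ = 1 := by
  rw [tau, ← Complex.exp_int_mul, Complex.norm_exp]
  have : ((n : ℂ) * (↑Real.pi * Complex.I / ↑d)).re = 0 := by
    simp [Complex.mul_re, Complex.div_re]
  rw [this, Real.exp_zero]

lemma conj_omega_zpow (d : ℕ) (n : ℤ) :
    (starRingEnd ℂ) (omega d ^ n) = omega d ^ (-n) := by
  rw [map_zpow₀, omega, ← Complex.exp_conj, _root_.zpow_neg, ← _root_.inv_zpow, ← Complex.exp_neg]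
  congr 2
  simp [Complex.ext_iff, Complex.div_re, Complex.div_im, neg_div]

lemma zmod_cast_val (d : ℕ) [NeZero d] (a : ZMod d) : (((a.val : ℤ)) : ZMod d) = a := by
  simp [ZMod.natCast_val, ZMod.intCast_cast, ZMod.cast_id]

lemma trace_disp (d : ℕ) [NeZero d] (ψ : ZMod d → ℂ) (a₁ a₂ : ZMod d) :
    (Disp d ((a₁.val : ℤ), (a₂.val : ℤ)) * proj ψ).trace
      = tau d ^ ((a₁.val : ℤ) * (a₂.val : ℤ)) *
        ∑ k : ZMod d, omega d ^ ((a₂.val : ℤ) * (k.val : ℤ)) *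
          (ψ k * (starRingEnd ℂ) (ψ (k + a₁))) := by
  simp only [Matrix.trace, Matrix.diag, Matrix.mul_apply, Disp, proj, Matrix.vecMulVec_apply,
    Pi.star_apply, RCLike.star_def, zmod_cast_val]
  rw [Finset.sum_comm, Finset.mul_sum]
  refine Finset.sum_congr rfl fun k _ => ?_
  rw [Finset.sum_eq_single (k + a₁)]
  · simp [mul_assoc, mul_comm, mul_left_comm]
  · intro j _ hj; simp [hj]
  · simp

lemma parseval (d : ℕ) [NeZero d] (c : ZMod d → ℂ) :
    ∑ m : ZMod d, ‖∑ k : ZMod d,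
        omega d ^ ((m.val : ℤ) * (k.val : ℤ)) * c k‖ ^ 2
      = d * ∑ k : ZMod d, ‖c k‖ ^ 2 := by
  have key : ∑ m : ZMod d, ((Complex.normSq (∑ k : ZMod d,
        omega d ^ ((m.val : ℤ) * (k.val : ℤ)) * c k) : ℂ))
      = (d : ℂ) * ∑ k : ZMod d, (Complex.normSq (c k) : ℂ) := by
    simp_rw [← Complex.mul_conj, map_sum, _root_.map_mul, conj_omega_zpow, Finset.sum_mul_sum]
    rw [Finset.sum_comm]
    have hterm : ∀ m k l : ZMod d,
        omega d ^ ((m.val : ℤ) * (k.val : ℤ)) * c k *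
          (omega d ^ (-((m.val : ℤ) * (l.val : ℤ))) * (starRingEnd ℂ) (c l))
        = omega d ^ ((m.val : ℤ) * ((k.val : ℤ) - (l.val : ℤ))) *
            (c k * (starRingEnd ℂ) (c l)) := by
      intro m k l
      rw [mul_sub, sub_eq_add_neg, zpow_add₀ (omega_ne_zero d)]
      ring
    calc ∑ k : ZMod d, ∑ m : ZMod d, ∑ l : ZMod d,
          omega d ^ ((m.val : ℤ) * (k.val : ℤ)) * c k *
            (omega d ^ (-((m.val : ℤ) * (l.val : ℤ))) * (starRingEnd ℂ) (c l))
        = ∑ k : ZMod d, ∑ l : ZMod d, (∑ m : ZMod d,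
            omega d ^ ((m.val : ℤ) * ((k.val : ℤ) - (l.val : ℤ)))) *
              (c k * (starRingEnd ℂ) (c l)) := by
          refine Finset.sum_congr rfl fun k _ => ?_
          rw [Finset.sum_comm]
          refine Finset.sum_congr rfl fun l _ => ?_
          rw [Finset.sum_mul]
          exact Finset.sum_congr rfl fun m _ => hterm m k l
      _ = (d : ℂ) * ∑ x : ZMod d, c x * (starRingEnd ℂ) (c x) := by
          simp_rw [sum_omega_zpow, ite_mul, zero_mul, Finset.sum_ite_eq,
            Finset.mem_univ, if_true, ← Finset.mul_sum]
  have := congrArg Complex.re key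
  simpa [Complex.sq_norm, Complex.ofReal_re] using this

lemma trace_disp_zero (d : ℕ) [NeZero d] (ψ : ZMod d → ℂ)
    (hψ : ∑ k, ‖ψ k‖ ^ 2 = 1) :
    (Disp d ((((0,0) : ZMod d × ZMod d).1.val : ℤ), (((0,0) : ZMod d × ZMod d).2.val : ℤ)) *
      proj ψ).trace = 1 := by
  rw [show (((0,0) : ZMod d × ZMod d).1.val : ℤ) = ((0 : ZMod d).val : ℤ) from rfl]
  rw [trace_disp d ψ 0 0]
  simp only [ZMod.val_zero, Int.ofNat_zero, Nat.cast_zero, zero_mul, mul_zero, zpow_zero, one_mul,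
    add_zero]
  have : ∀ k : ZMod d, ψ k * (starRingEnd ℂ) (ψ k) = ((‖ψ k‖ ^ 2 : ℝ) : ℂ) := by
    intro k; rw [Complex.mul_conj, Complex.sq_norm]
  simp_rw [this]
  rw [← Complex.ofReal_sum]
  rw [hψ]
  simp

lemma sum_abs_trace (d : ℕ) [NeZero d] (ψ : ZMod d → ℂ)
    (hψ : ∑ k, ‖ψ k‖ ^ 2 = 1) :
    ∑ a : ZMod d × ZMod d,
      ‖(Disp d ((a.1.val : ℤ), (a.2.val : ℤ)) * proj ψ).trace‖ ^ 2 = d := by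
  rw [Fintype.sum_prod_type]
  have h1 : ∀ a₁ a₂ : ZMod d,
      ‖(Disp d ((a₁.val : ℤ), (a₂.val : ℤ)) * proj ψ).trace‖ ^ 2
        = ‖∑ k : ZMod d, omega d ^ ((a₂.val : ℤ) * (k.val : ℤ)) *
            (ψ k * (starRingEnd ℂ) (ψ (k + a₁)))‖ ^ 2 := by
    intro a₁ a₂
    rw [trace_disp, norm_mul, abs_tau_zpow, one_mul]
  simp_rw [h1, parseval]
  have h2 : ∀ a₁ k : ZMod d, ‖ψ k * (starRingEnd ℂ) (ψ (k + a₁))‖ ^ 2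
      = ‖ψ k‖ ^ 2 * ‖ψ (k + a₁)‖ ^ 2 := by
    intro a₁ k
    rw [norm_mul, mul_pow, Complex.norm_conj]
  simp_rw [h2, ← Finset.mul_sum]
  rw [Finset.sum_comm]
  have h3 : ∀ k : ZMod d, ∑ a₁ : ZMod d, ‖ψ k‖ ^ 2 * ‖ψ (k + a₁)‖ ^ 2
      = ‖ψ k‖ ^ 2 := by
    intro k
    rw [← Finset.mul_sum]
    have : ∑ a₁ : ZMod d, ‖ψ (k + a₁)‖ ^ 2 = ∑ x : ZMod d, ‖ψ x‖ ^ 2 :=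
      Equiv.sum_comp (Equiv.addLeft k) (fun x => ‖ψ x‖ ^ 2)
    rw [this, hψ, mul_one]
  simp_rw [h3, hψ, mul_one]

lemma final_bound (d : ℕ) [NeZero d] (α : ℝ) (hα : 2 ≤ α) (y : ZMod d × ZMod d → ℝ)
    (hynn : ∀ a, 0 ≤ y a) (hy0 : y (0,0) = 1) (hysum : ∑ a, y a = (d:ℝ)) :
    (1 + ((d:ℝ) - 1) * ((d:ℝ) + 1) ^ (1 - α)) * (d:ℝ) ^ (-α)
      ≤ ∑ a : ZMod d × ZMod d, ((1/(d:ℝ)) * y a) ^ α := by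
  have hd0 : 0 < (d:ℝ) := by exact_mod_cast Nat.pos_of_ne_zero (NeZero.ne d)
  rcases eq_or_ne d 1 with hd | hd
  · subst hd
    have huniv : (Finset.univ : Finset (ZMod 1 × ZMod 1)) = {(0,0)} := by
      ext a
      simp [Subsingleton.elim a ((0,0) : ZMod 1 × ZMod 1)]
    rw [huniv, Finset.sum_singleton, hy0]
    norm_num [Real.one_rpow]
  · have hd2 : 2 ≤ d := by
      rcases d with _ | _ | d
      · exact absurd rfl (NeZero.ne 0)
      · exact absurd rfl hd
      · omega
    have hd2R : (2:ℝ) ≤ (d:ℝ) := by exact_mod_cast hd2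
    set s : Finset (ZMod d × ZMod d) := Finset.univ.erase (0,0) with hs
    set N : ℝ := (d:ℝ)^2 - 1 with hN
    have hNpos : (0:ℝ) < N := by rw [hN]; nlinarith
    have hcardN : (s.card : ℝ) = N := by
      rw [hs, Finset.card_erase_of_mem (Finset.mem_univ _), Finset.card_univ,
        Fintype.card_prod, ZMod.card, hN]
      have h1 : 1 ≤ d * d := Nat.one_le_iff_ne_zero.mpr (by positivity)
      push_cast [Nat.cast_sub h1]
      ring
    have hsums : ∑ a ∈ s, y a = (d:ℝ) - 1 := by
      have h := Finset.add_sum_erase Finset.univ y (Finset.mem_univ ((0,0) : ZMod d × ZMod d))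
      rw [hy0, hysum] at h
      rw [hs]; linarith
    have hα1 : (1:ℝ) ≤ α := by linarith
    have jensen := Real.rpow_arith_mean_le_arith_mean_rpow s (fun _ => 1/N)
      (fun a => (1/(d:ℝ)) * y a) (fun i _ => by positivity)
      (by rw [Finset.sum_const, nsmul_eq_mul, hcardN]; field_simp)
      (fun i _ => mul_nonneg (by positivity) (hynn i)) hα1
    have hLHS : ∑ a ∈ s, (1/N) * ((1/(d:ℝ)) * y a) = 1 / ((d:ℝ) * ((d:ℝ)+1)) := by
      rw [← Finset.mul_sum, ← Finset.mul_sum, hsums, hN]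
      have hd1 : (d:ℝ) + 1 ≠ 0 := by linarith
      have hN1 : (d:ℝ)^2 - 1 ≠ 0 := by nlinarith
      field_simp
      ring
    rw [hLHS] at jensen
    rw [show ∑ a ∈ s, (1/N) * ((1/(d:ℝ)) * y a) ^ α
        = (1/N) * ∑ a ∈ s, ((1/(d:ℝ)) * y a) ^ α from (Finset.mul_sum _ _ _).symm] at jensen
    have hsum_s : N * (1 / ((d:ℝ) * ((d:ℝ)+1))) ^ α ≤ ∑ a ∈ s, ((1/(d:ℝ)) * y a) ^ α := by
      have h2 := mul_le_mul_of_nonneg_left jensen hNpos.le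
      calc N * (1/((d:ℝ)*((d:ℝ)+1)))^α
          ≤ N * ((1/N) * ∑ a ∈ s, ((1/(d:ℝ)) * y a)^α) := h2
        _ = ∑ a ∈ s, ((1/(d:ℝ)) * y a)^α := by field_simp
    have hsplit := Finset.add_sum_erase Finset.univ (fun a => ((1/(d:ℝ)) * y a) ^ α)
      (Finset.mem_univ ((0,0) : ZMod d × ZMod d))
    rw [← hs] at hsplit
    simp only [hy0, mul_one] at hsplit
    have h1d : ((1:ℝ)/(d:ℝ)) ^ α = (d:ℝ) ^ (-α) := by
      rw [one_div, Real.inv_rpow hd0.le, ← Real.rpow_neg hd0.le]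
    have hLα : (1 / ((d:ℝ) * ((d:ℝ)+1))) ^ α = (d:ℝ)^(-α) * ((d:ℝ)+1)^(-α) := by
      rw [one_div, Real.inv_rpow (by positivity), Real.mul_rpow hd0.le (by positivity),
        mul_inv, ← Real.rpow_neg hd0.le, ← Real.rpow_neg (by positivity)]
    have hpow1 : ((d:ℝ)+1) ^ (1-α) = ((d:ℝ)+1) * ((d:ℝ)+1)^(-α) := by
      rw [show (1-α) = 1 + (-α) by ring, Real.rpow_add (by positivity), Real.rpow_one]
    calc (1 + ((d:ℝ)-1) * ((d:ℝ)+1)^(1-α)) * (d:ℝ)^(-α)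
        = ((1:ℝ)/(d:ℝ))^α + N * (1/((d:ℝ)*((d:ℝ)+1)))^α := by
          rw [h1d, hLα, hpow1, hN]; ring
      _ ≤ ((1:ℝ)/(d:ℝ))^α + ∑ a ∈ s, ((1/(d:ℝ)) * y a)^α := by linarith
      _ = ∑ a : ZMod d × ZMod d, ((1/(d:ℝ)) * y a)^α := hsplit

/-- Upper bound on the stabilizer entropy: for any unit vector `ψ ∈ ℂ^d` and real `α ≥ 2`,
`M_α(ψ) ≤ (1/(1-α)) log[(1 + (d-1)(d+1)^{1-α})/d]`. -/
theorem stabEntropy_le (d : ℕ) [NeZero d] (α : ℝ) (hα : 2 ≤ α)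
    (ψ : ZMod d → ℂ) (hψ : ∑ k, ‖ψ k‖ ^ 2 = 1) :
    stabEntropy d α (proj ψ) ≤
      (1 / (1 - α)) *
        Real.log ((1 + ((d : ℝ) - 1) * ((d : ℝ) + 1) ^ (1 - α)) / d) := by
  have hd0 : 0 < (d:ℝ) := by exact_mod_cast Nat.pos_of_ne_zero (NeZero.ne d)
  have h1α : 1 - α < 0 := by linarith
  set B : ℝ := 1 + ((d : ℝ) - 1) * ((d : ℝ) + 1) ^ (1 - α) with hB
  have hd1 : (1:ℝ) ≤ (d:ℝ) := by exact_mod_cast Nat.one_le_iff_ne_zero.mpr (NeZero.ne d)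
  have hBpos : 0 < B := by
    have : 0 ≤ ((d:ℝ) - 1) * ((d:ℝ) + 1) ^ (1 - α) :=
      mul_nonneg (by linarith) (Real.rpow_nonneg (by linarith) _)
    rw [hB]; linarith
  have hS : B * (d:ℝ) ^ (-α) ≤ ∑ a : ZMod d × ZMod d,
      ((1/(d:ℝ)) * ‖(Disp d ((a.1.val : ℤ), (a.2.val : ℤ)) * proj ψ).trace‖ ^ 2) ^ α :=
    final_bound d α hα
      (fun a => ‖(Disp d ((a.1.val : ℤ), (a.2.val : ℤ)) * proj ψ).trace‖ ^ 2)
      (fun a => sq_nonneg _)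
      (by simp only []; rw [trace_disp_zero d ψ hψ]; simp)
      (sum_abs_trace d ψ hψ)
  have hSpos : 0 < B * (d:ℝ) ^ (-α) := mul_pos hBpos (Real.rpow_pos_of_pos hd0 _)
  have hlog := Real.log_le_log hSpos hS
  have hcoef : (1:ℝ)/(1-α) ≤ 0 := by
    apply div_nonpos_of_nonneg_of_nonpos <;> linarith
  have hmul := mul_le_mul_of_nonpos_left hlog hcoef
  have hid : (1/(1-α)) * Real.log (B * (d:ℝ)^(-α)) - Real.log d = (1/(1-α)) * Real.log (B / d) := by
    rw [Real.log_mul hBpos.ne' (Real.rpow_pos_of_pos hd0 _).ne', Real.log_rpow hd0,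
      Real.log_div hBpos.ne' hd0.ne']
    have h1 : (1:ℝ) - α ≠ 0 := by linarith
    field_simp
    ring
  rw [stabEntropy]
  linarith [hmul, hid]
end
end
end
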